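/- For every complex s with Re s > 0, the series Σ_{m=1}^{∞} μ(m)/(ρ(m)·m^{1+s}) converges absolutely, the infinite product α(s) = Π_p (1 + 1/p − p^{−s−1}) / ((1 + 1/p)(1 − p^{−s−1})) over all primes p converges, and Σ_{m=1}^{∞} μ(m)/(ρ(m)·m^{1+s}) = α(s)/ζ(s+1). Moreover α(0) = ζ(2). -/

import Mathlib

noncomputable section

open Finset

/-- `ρ(m) = Π_{p ∣ m} (1 + 1/p)`, the product over the prime divisors of `m`. -/
def rho (m : ℕ) : ℝ := ∏ p ∈ m.primeFactors, (1 + 1 / (p : ℝ))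

lemma rho_one_le (m : ℕ) : 1 ≤ rho m := by
  unfold rho
  calc (1:ℝ) = ∏ _p ∈ m.primeFactors, 1 := by simp
    _ ≤ ∏ p ∈ m.primeFactors, (1 + 1 / (p : ℝ)) :=
        Finset.prod_le_prod (by intros; norm_num) (by
          intro p hp
          have h1 : (0:ℝ) ≤ 1/(p:ℝ) := by positivity
          linarith)

lemma rho_pos (m : ℕ) : 0 < rho m := lt_of_lt_of_le one_pos (rho_one_le m)

lemma rho_mul {m n : ℕ} (hm : m ≠ 0) (hn : n ≠ 0) (h : Nat.Coprime m n) :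
    rho (m * n) = rho m * rho n := by
  unfold rho
  rw [Nat.primeFactors_mul hm hn, Finset.prod_union h.disjoint_primeFactors]

lemma rho_prime {p : ℕ} (hp : p.Prime) : rho p = 1 + 1 / (p : ℝ) := by
  unfold rho
  rw [hp.primeFactors, Finset.prod_singleton]

lemma rho_one : rho 1 = 1 := by simp [rho]

section main

variable (s : ℂ)

/-- the multiplicative summand -/
def Fm (n : ℕ) : ℂ :=
  (ArithmeticFunction.moebius n : ℂ) / ((rho n : ℂ) * (n : ℂ) ^ ((1 : ℂ) + s))

lemma Fm_zero : Fm s 0 = 0 := by simp [Fm]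

lemma Fm_one : Fm s 1 = 1 := by simp [Fm, rho_one]

lemma Fm_mul {m n : ℕ} (h : Nat.Coprime m n) : Fm s (m * n) = Fm s m * Fm s n := by
  rcases eq_or_ne m 0 with hm | hm
  · simp [hm, Fm_zero]
  rcases eq_or_ne n 0 with hn | hn
  · simp [hn, Fm_zero]
  unfold Fm
  have hmu : (ArithmeticFunction.moebius (m * n) : ℤ)
      = ArithmeticFunction.moebius m * ArithmeticFunction.moebius n :=
    ArithmeticFunction.isMultiplicative_moebius.map_mul_of_coprime h
  have hcast : ((m * n : ℕ) : ℂ) = ((m : ℝ) : ℂ) * ((n : ℝ) : ℂ) := by push_cast; ring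
  rw [hcast, Complex.mul_cpow_ofReal_nonneg m.cast_nonneg n.cast_nonneg, rho_mul hm hn h,
    div_mul_div_comm, hmu]
  push_cast
  congr 1
  ring

lemma Fm_norm_summable (hs : 0 < s.re) : Summable (fun n : ℕ => ‖Fm s n‖) := by
  have h1 : (1 : ℝ) < 1 + s.re := by linarith
  have hsum : Summable (fun n : ℕ => 1 / (n : ℝ) ^ (1 + s.re)) :=
    (Real.summable_one_div_nat_rpow).mpr h1
  refine Summable.of_nonneg_of_le (fun n => norm_nonneg _) (fun n => ?_) hsum
  rcases eq_or_ne n 0 with hn | hn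
  · simp [hn, Fm_zero, Real.zero_rpow (by linarith : (1:ℝ) + s.re ≠ 0)]
  have hnpos : 0 < n := Nat.pos_of_ne_zero hn
  have hnorm : ‖((n : ℕ) : ℂ) ^ ((1 : ℂ) + s)‖ = (n : ℝ) ^ ((1:ℝ) + s.re) := by
    rw [Complex.norm_natCast_cpow_of_pos hnpos]
    simp
  have hmu : ‖(ArithmeticFunction.moebius n : ℂ)‖ ≤ 1 := by
    rcases eq_or_ne (ArithmeticFunction.moebius n) 0 with h | h
    · simp [h]
    · rcases ArithmeticFunction.moebius_ne_zero_iff_eq_or.mp h with h' | h' <;> simp [h']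
  unfold Fm
  rw [norm_div, norm_mul, hnorm]
  have hrho : ‖((rho n : ℝ) : ℂ)‖ = rho n := by
    rw [Complex.norm_real, Real.norm_of_nonneg (rho_pos n).le]
  rw [hrho]
  have hrp : (0:ℝ) < (n : ℝ) ^ ((1:ℝ) + s.re) := by
    apply Real.rpow_pos_of_pos
    exact_mod_cast hnpos
  apply div_le_div₀ (by norm_num) hmu (by positivity)
  calc (n : ℝ) ^ ((1:ℝ) + s.re) = 1 * ((n : ℝ) ^ ((1:ℝ) + s.re)) := by ring
    _ ≤ rho n * ((n : ℝ) ^ ((1:ℝ) + s.re)) :=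
        mul_le_mul_of_nonneg_right (rho_one_le n) hrp.le

lemma Fm_prime_pow_tsum {p : ℕ} (hp : p.Prime) :
    ∑' e : ℕ, Fm s (p ^ e) = 1 + Fm s p := by
  rw [tsum_eq_sum (s := ({0, 1} : Finset ℕ)) ?h]
  · rw [Finset.sum_pair (by norm_num)]
    simp [Fm_one]
  case h =>
    intro e he
    simp only [Finset.mem_insert, Finset.mem_singleton] at he
    push_neg at he
    have : ArithmeticFunction.moebius (p ^ e) = 0 := by
      rw [ArithmeticFunction.moebius_apply_prime_pow hp he.1, if_neg he.2]
    simp [Fm, this]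

lemma Fm_prime (p : ℕ) (h : p.Prime) :
    1 + Fm s p = (1 + 1 / (p : ℂ) - (p : ℂ) ^ (-s - 1)) / (1 + 1 / (p : ℂ)) := by
  have hp0 : ((p : ℕ) : ℂ) ≠ 0 := Nat.cast_ne_zero.mpr h.pos.ne'
  have hX : (p : ℂ) ^ ((1 : ℂ) + s) ≠ 0 := by
    simp [Complex.cpow_eq_zero_iff, hp0]
  have hXneg : (p : ℂ) ^ (-s - 1) = ((p : ℂ) ^ ((1 : ℂ) + s))⁻¹ := by
    rw [show -s - 1 = -((1:ℂ) + s) by ring, Complex.cpow_neg]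
  have h1p : (1 : ℂ) + 1 / (p : ℂ) ≠ 0 := by
    have hd : ((p : ℕ) : ℂ) + 1 ≠ 0 := by
      have := Nat.cast_ne_zero (R := ℂ).mpr (Nat.succ_ne_zero p)
      push_cast at this
      exact this
    field_simp
    exact div_ne_zero hd hp0
  have hrho : ((rho p : ℝ) : ℂ) = 1 + 1 / (p : ℂ) := by
    rw [rho_prime h]
    push_cast
    ring
  have key : ∀ a X : ℂ, a ≠ 0 → X ≠ 0 → 1 + (-1)/(a*X) = (a - X⁻¹)/a := by
    intro a X ha hX
    field_simp
    ring
  unfold Fm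
  rw [ArithmeticFunction.moebius_apply_prime h, hrho, hXneg]
  push_cast
  exact key _ _ h1p hX

set_option maxHeartbeats 1000000 in
/-- for `Re s > 0`, the series `Σ_{m≥1} μ(m)/(ρ(m) m^{1+s})` converges
absolutely, the Euler product
`α(s) = Π_p (1 + 1/p − p^{−s−1})/((1 + 1/p)(1 − p^{−s−1}))` converges, and the series
equals `α(s)/ζ(s+1)`.  Moreover `α(0) = ζ(2)`. -/
theorem moebius_over_rho_series (s : ℂ) (hs : 0 < s.re) :
    Summable (fun m : ℕ =>
      ‖(ArithmeticFunction.moebius (m + 1) : ℂ) /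
        ((rho (m + 1) : ℂ) * ((m + 1 : ℕ) : ℂ) ^ ((1 : ℂ) + s))‖) ∧
    Multipliable (fun p : Nat.Primes =>
      (1 + 1 / ((p : ℕ) : ℂ) - ((p : ℕ) : ℂ) ^ (-s - 1)) /
        ((1 + 1 / ((p : ℕ) : ℂ)) * (1 - ((p : ℕ) : ℂ) ^ (-s - 1)))) ∧
    (∑' m : ℕ, (ArithmeticFunction.moebius (m + 1) : ℂ) /
        ((rho (m + 1) : ℂ) * ((m + 1 : ℕ) : ℂ) ^ ((1 : ℂ) + s)))
      = (∏' p : Nat.Primes,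
          (1 + 1 / ((p : ℕ) : ℂ) - ((p : ℕ) : ℂ) ^ (-s - 1)) /
            ((1 + 1 / ((p : ℕ) : ℂ)) * (1 - ((p : ℕ) : ℂ) ^ (-s - 1)))) /
          riemannZeta (s + 1) ∧
    (∏' p : Nat.Primes,
        (1 + 1 / ((p : ℕ) : ℂ) - ((p : ℕ) : ℂ) ^ (-(0 : ℂ) - 1)) /
          ((1 + 1 / ((p : ℕ) : ℂ)) * (1 - ((p : ℕ) : ℂ) ^ (-(0 : ℂ) - 1))))
      = riemannZeta 2 := by
  have hnormsum := Fm_norm_summable s hs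
  -- part 1
  have part1 : Summable (fun m : ℕ => ‖Fm s (m + 1)‖) :=
    (summable_nat_add_iff 1).mpr hnormsum
  -- Euler product for Fm
  have hEP : HasProd (fun p : Nat.Primes => ∑' e : ℕ, Fm s ((p : ℕ) ^ e))
      (∑' n : ℕ, Fm s n) :=
    EulerProduct.eulerProduct_hasProd (Fm_one s) (fun {m n} h => Fm_mul s h)
      hnormsum (Fm_zero s)
  have hfun : (fun p : Nat.Primes => ∑' e : ℕ, Fm s ((p : ℕ) ^ e))
      = fun p : Nat.Primes =>
        (1 + 1 / ((p : ℕ) : ℂ) - ((p : ℕ) : ℂ) ^ (-s - 1)) / (1 + 1 / ((p : ℕ) : ℂ)) := by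
    funext p
    rw [Fm_prime_pow_tsum s p.prop, Fm_prime s (p : ℕ) p.prop]
  rw [hfun] at hEP
  -- zeta Euler product
  have hre1 : 1 < (s + 1).re := by
    simp only [Complex.add_re, Complex.one_re]
    linarith
  have hZ := riemannZeta_eulerProduct_hasProd hre1
  have hZfun : (fun p : Nat.Primes => (1 - ((p : ℕ) : ℂ) ^ (-(s + 1)))⁻¹)
      = fun p : Nat.Primes => (1 - ((p : ℕ) : ℂ) ^ (-s - 1))⁻¹ := by
    funext p
    rw [show -(s + 1) = -s - 1 by ring]
  rw [hZfun] at hZ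
  have hαfun : (fun p : Nat.Primes =>
      ((1 + 1 / ((p : ℕ) : ℂ) - ((p : ℕ) : ℂ) ^ (-s - 1)) / (1 + 1 / ((p : ℕ) : ℂ))) *
        (1 - ((p : ℕ) : ℂ) ^ (-s - 1))⁻¹)
      = fun p : Nat.Primes =>
        (1 + 1 / ((p : ℕ) : ℂ) - ((p : ℕ) : ℂ) ^ (-s - 1)) /
          ((1 + 1 / ((p : ℕ) : ℂ)) * (1 - ((p : ℕ) : ℂ) ^ (-s - 1))) := by
    funext p
    rw [← one_div, div_mul_div_comm, mul_one]
  have hα : HasProd (fun p : Nat.Primes =>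
      (1 + 1 / ((p : ℕ) : ℂ) - ((p : ℕ) : ℂ) ^ (-s - 1)) /
        ((1 + 1 / ((p : ℕ) : ℂ)) * (1 - ((p : ℕ) : ℂ) ^ (-s - 1))))
      ((∑' n : ℕ, Fm s n) * riemannZeta (s + 1)) := by
    rw [← hαfun]
    exact hEP.mul hZ
  refine ⟨part1, hα.multipliable, ?_, ?_⟩
  · -- the series identity
    have hζne : riemannZeta (s + 1) ≠ 0 := riemannZeta_ne_zero_of_one_lt_re hre1
    have hshift : (∑' n : ℕ, Fm s n) = ∑' m : ℕ, Fm s (m + 1) := by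
      rw [Summable.tsum_eq_zero_add hnormsum.of_norm, Fm_zero, zero_add]
    have hFm : (fun m : ℕ => (ArithmeticFunction.moebius (m + 1) : ℂ) /
        ((rho (m + 1) : ℂ) * ((m + 1 : ℕ) : ℂ) ^ ((1 : ℂ) + s)))
        = fun m : ℕ => Fm s (m + 1) := rfl
    rw [hFm, hα.tprod_eq, ← hshift, mul_div_assoc, div_self hζne, mul_one]
  · -- α(0) = ζ(2)
    have h2 : (1 : ℝ) < (2 : ℂ).re := by norm_num
    rw [← riemannZeta_eulerProduct_tprod h2]
    apply tprod_congr
    intro p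
    have hprime := p.prop
    have hp0 : ((p : ℕ) : ℂ) ≠ 0 := Nat.cast_ne_zero.mpr hprime.pos.ne'
    have hp1 : ((p : ℕ) : ℂ) ≠ 1 := by
      exact_mod_cast fun h => hprime.ne_one (Nat.cast_injective h)
    have hd : ((p : ℕ) : ℂ) + 1 ≠ 0 := by
      have := Nat.cast_ne_zero (R := ℂ).mpr (Nat.succ_ne_zero (p : ℕ))
      push_cast at this
      exact this
    have e1 : ((p : ℕ) : ℂ) ^ (-(0:ℂ) - 1) = ((p : ℕ) : ℂ)⁻¹ := by
      rw [show -(0:ℂ) - 1 = -1 by ring]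
      exact Complex.cpow_neg_one _
    have e2 : ((p : ℕ) : ℂ) ^ (-(2:ℂ)) = (((p : ℕ) : ℂ) ^ (2:ℕ))⁻¹ := by
      rw [show -(2:ℂ) = -((2:ℕ):ℂ) by norm_num, Complex.cpow_neg, Complex.cpow_natCast]
    rw [e1, e2]
    have hq : ((p : ℕ) : ℂ) ^ 2 - 1 ≠ 0 := by
      rw [show ((p : ℕ) : ℂ) ^ 2 - 1 = (((p : ℕ) : ℂ) - 1) * (((p : ℕ) : ℂ) + 1) by ring]
      exact mul_ne_zero (sub_ne_zero.mpr hp1) hd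
    have hq' : ((p : ℕ) : ℂ) ^ 2 ≠ 1 := sub_ne_zero.mp hq
    field_simp
    ring

end main

end
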